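/- Let w ∈ S_n contain a 132 pattern, with p, q defined as the largest indices of the associated 132 transition (p the largest index t admitting i < t < j with w(i) < w(j) < w(t); q the largest j > p with w(j) < w(p) and ∃ i < p, w(i) < w(j)). Let i ∈ I(w t_{p,q}, p) = { i < p : ℓ(w t_{p,q} t_{i,p}) = ℓ(w) }, and set w' = w t_{p,q} t_{i,p}. If w' also contains a 132 pattern with associated indices p', q', then (p', w'(q')) < (p, w(q)) in the lexicographic order on (row, column). -/

import Mathlib

/-- The number of inversions of a permutation of `Fin n`. -/
def numInv {n : ℕ} (w : Equiv.Perm (Fin n)) : ℕ :=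
  (Finset.univ.filter (fun x : Fin n × Fin n => x.1 < x.2 ∧ w x.2 < w x.1)).card

lemma numInv_mul_swap_lt {n : ℕ} (u : Equiv.Perm (Fin n)) (a b : Fin n)
    (hab : a < b) (hv : u b < u a) :
    numInv (u * Equiv.swap a b) < numInv u := by
  classical
  set σ : Equiv.Perm (Fin n) := Equiv.swap a b with hσ
  have hσa : σ a = b := Equiv.swap_apply_left a b
  have hσb : σ b = a := Equiv.swap_apply_right a b
  have hσo : ∀ x : Fin n, x ≠ a → x ≠ b → σ x = x := fun x h1 h2 =>
    Equiv.swap_apply_of_ne_of_ne h1 h2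
  have hσσ : ∀ x : Fin n, σ (σ x) = x := fun x => Equiv.swap_apply_self a b x
  set S := Finset.univ.filter
    (fun x : Fin n × Fin n => x.1 < x.2 ∧ (u * σ) x.2 < (u * σ) x.1) with hS
  set T := Finset.univ.filter
    (fun x : Fin n × Fin n => x.1 < x.2 ∧ u x.2 < u x.1) with hT
  have hmem : ∀ z : Fin n × Fin n, z ∈ S ↔ z.1 < z.2 ∧ u (σ z.2) < u (σ z.1) := by
    intro z; rw [hS, Finset.mem_filter]; simp [Equiv.Perm.mul_apply]
  have hmemT : ∀ z : Fin n × Fin n, z ∈ T ↔ z.1 < z.2 ∧ u z.2 < u z.1 := by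
    intro z; simp [hT]
  have habT : (a, b) ∈ T := (hmemT (a, b)).mpr ⟨hab, hv⟩
  -- classification of order-flipping pairs
  have key : ∀ x y : Fin n, x < y → u (σ y) < u (σ x) → ¬ σ x < σ y →
      (x = a ∧ a < y ∧ y < b) ∨ (y = b ∧ a < x) := by
    intro x y hxy hu hns
    by_cases hxa : x = a
    · by_cases hyb : y = b
      · rw [hxa, hyb, hσa, hσb] at hu
        exact absurd hu hv.asymm
      · have hya : y ≠ a := hxa ▸ hxy.ne'
        rw [hxa, hσa, hσo y hya hyb] at hns
        have hyb' : y < b := lt_of_le_of_ne (not_lt.mp hns) hyb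
        exact Or.inl ⟨hxa, hxa ▸ hxy, hyb'⟩
    · by_cases hyb : y = b
      · have hxb : x ≠ b := hyb ▸ hxy.ne
        rw [hyb, hσb, hσo x hxa hxb] at hns
        exact Or.inr ⟨hyb, lt_of_le_of_ne (not_lt.mp hns) (Ne.symm hxa)⟩
      · by_cases hya : y = a
        · have hxb : x ≠ b := fun h => absurd ((hya ▸ h ▸ hxy : b < a)) (not_lt.mpr hab.le)
          rw [hya, hσa, hσo x hxa hxb] at hns
          exact absurd (lt_of_lt_of_le (hya ▸ hxy : x < a) hab.le) hns
        · by_cases hxb : x = b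
          · rw [hxb, hσb, hσo y hya hyb] at hns
            exact absurd (lt_trans hab (hxb ▸ hxy : b < y)) hns
          · rw [hσo x hxa hxb, hσo y hya hyb] at hns
            exact absurd hxy hns
  set f : Fin n × Fin n → Fin n × Fin n := fun z =>
    if σ z.1 < σ z.2 then (σ z.1, σ z.2) else if z.1 = a then (a, z.2) else (z.1, b) with hf
  have hmaps : ∀ z ∈ S, f z ∈ T.erase (a, b) := by
    intro z hz
    obtain ⟨hlt, hu⟩ := (hmem z).mp hz
    rw [Finset.mem_erase]
    by_cases hb1 : σ z.1 < σ z.2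
    · have hfz : f z = (σ z.1, σ z.2) := if_pos hb1
      rw [hfz]
      refine ⟨?_, (hmemT _).mpr ⟨hb1, hu⟩⟩
      intro h
      have h1 : σ z.1 = a := congrArg Prod.fst h
      have h2 : σ z.2 = b := congrArg Prod.snd h
      have : z.1 = b := by rw [← hσσ z.1, h1, hσa]
      have h4 : z.2 = a := by rw [← hσσ z.2, h2, hσb]
      rw [this, h4] at hlt
      exact absurd hlt hab.asymm
    · rcases key z.1 z.2 hlt hu hb1 with ⟨h1, h2, h3⟩ | ⟨h1, h2⟩
      · have hfz : f z = (a, z.2) := by rw [hf]; simp only [if_neg hb1, if_pos h1]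
        rw [hfz]
        refine ⟨fun h => h3.ne (congrArg Prod.snd h), (hmemT _).mpr ⟨h2, ?_⟩⟩
        rw [h1, hσa, hσo z.2 h2.ne' h3.ne] at hu
        exact lt_trans hu hv
      · have hna : z.1 ≠ a := h2.ne'
        have hfz : f z = (z.1, b) := by rw [hf]; simp only [if_neg hb1, if_neg hna]
        rw [hfz]
        have hxb : z.1 < b := h1 ▸ hlt
        refine ⟨fun h => hna (congrArg Prod.fst h), (hmemT _).mpr ⟨hxb, ?_⟩⟩
        rw [h1, hσb, hσo z.1 hna hxb.ne] at hu
        exact lt_trans hv hu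
  set g : Fin n × Fin n → Fin n × Fin n := fun c =>
    if c.1 = a ∧ a < c.2 ∧ c.2 < b then c
    else if c.2 = b ∧ a < c.1 ∧ c.1 < b then c else (σ c.1, σ c.2) with hg
  have hret : ∀ z ∈ S, g (f z) = z := by
    intro z hz
    obtain ⟨hlt, hu⟩ := (hmem z).mp hz
    by_cases hb1 : σ z.1 < σ z.2
    · have hfz : f z = (σ z.1, σ z.2) := if_pos hb1
      rw [hfz, hg]
      have hc1 : ¬ (σ z.1 = a ∧ a < σ z.2 ∧ σ z.2 < b) := by
        rintro ⟨e1, e2, e3⟩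
        have hz1 : z.1 = b := by rw [← hσσ z.1, e1, hσa]
        have hz2b : b < z.2 := hz1 ▸ hlt
        have : σ z.2 = z.2 := hσo z.2 (lt_trans hab hz2b).ne' hz2b.ne'
        rw [this] at e3
        exact absurd (lt_trans hz2b e3) (lt_irrefl b)
      have hc2 : ¬ (σ z.2 = b ∧ a < σ z.1 ∧ σ z.1 < b) := by
        rintro ⟨e1, e2, e3⟩
        have hz2 : z.2 = a := by rw [← hσσ z.2, e1, hσb]
        have hz1a : z.1 < a := hz2 ▸ hlt
        have : σ z.1 = z.1 := hσo z.1 hz1a.ne (lt_trans hz1a hab).ne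
        rw [this] at e2
        exact absurd (lt_trans e2 hz1a) (lt_irrefl a)
      simp only [if_neg hc1, if_neg hc2, hσσ]
    · rcases key z.1 z.2 hlt hu hb1 with ⟨h1, h2, h3⟩ | ⟨h1, h2⟩
      · have hfz : f z = (a, z.2) := by rw [hf]; simp only [if_neg hb1, if_pos h1]
        rw [hfz, hg]
        have hc1 : (a : Fin n) = a ∧ a < z.2 ∧ z.2 < b := ⟨rfl, h2, h3⟩
        dsimp only
        rw [if_pos hc1]
        exact Prod.ext h1.symm rfl
      · have hna : z.1 ≠ a := h2.ne'
        have hfz : f z = (z.1, b) := by rw [hf]; simp only [if_neg hb1, if_neg hna]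
        rw [hfz, hg]
        have hxb : z.1 < b := h1 ▸ hlt
        have hc1 : ¬ (z.1 = a ∧ a < b ∧ b < b) := by rintro ⟨_, _, e⟩; exact absurd e (lt_irrefl b)
        have hc2 : (b : Fin n) = b ∧ a < z.1 ∧ z.1 < b := ⟨rfl, h2, hxb⟩
        dsimp only
        rw [if_neg hc1, if_pos hc2]
        exact Prod.ext rfl h1.symm
  have hinj : Set.InjOn f S := fun z₁ h₁ z₂ h₂ he => by
    rw [← hret z₁ h₁, ← hret z₂ h₂, he]
  have hcard : S.card ≤ (T.erase (a, b)).card :=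
    Finset.card_le_card_of_injOn f hmaps hinj
  have hlt2 : (T.erase (a, b)).card < T.card := Finset.card_erase_lt_of_mem habT
  exact lt_of_le_of_lt hcard hlt2

theorem stmt_12 {n : ℕ} (w : Equiv.Perm (Fin n)) (p q i : Fin n)
    (hp : ∃ a b : Fin n, a < p ∧ p < b ∧ w a < w b ∧ w b < w p)
    (hpmax : ∀ t : Fin n, (∃ a b : Fin n, a < t ∧ t < b ∧ w a < w b ∧ w b < w t) → t ≤ p)
    (hq : p < q ∧ w q < w p ∧ ∃ a : Fin n, a < p ∧ w a < w q)
    (hqmax : ∀ b : Fin n, p < b → w b < w p → (∃ a : Fin n, a < p ∧ w a < w b) → b ≤ q)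
    (hi : i < p) (hiI : numInv (w * Equiv.swap p q * Equiv.swap i p) = numInv w)
    (w' : Equiv.Perm (Fin n)) (hw' : w' = w * Equiv.swap p q * Equiv.swap i p)
    (p' q' : Fin n)
    (hp' : ∃ a b : Fin n, a < p' ∧ p' < b ∧ w' a < w' b ∧ w' b < w' p')
    (hp'max : ∀ t : Fin n, (∃ a b : Fin n, a < t ∧ t < b ∧ w' a < w' b ∧ w' b < w' t) → t ≤ p')
    (hq' : p' < q' ∧ w' q' < w' p' ∧ ∃ a : Fin n, a < p' ∧ w' a < w' q')
    (hq'max : ∀ b : Fin n, p' < b → w' b < w' p' → (∃ a : Fin n, a < p' ∧ w' a < w' b) → b ≤ q') :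
    p' < p ∨ (p' = p ∧ w' q' < w q) := by
  classical
  obtain ⟨hpq, hwqp, a₀, ha₀p, hwa₀⟩ := hq
  have hiq : i < q := lt_trans hi hpq
  -- w i < w q, derived from invariance of the inversion number
  have hwiq : w i < w q := by
    by_contra h
    have hne : w q ≠ w i := fun e => hiq.ne' (w.injective e)
    have hqi : w q < w i := lt_of_le_of_ne (not_lt.mp h) hne
    have h1 : numInv (w * Equiv.swap p q) < numInv w :=
      numInv_mul_swap_lt w p q hpq hwqp
    have hvp : (w * Equiv.swap p q) p = w q := by
      rw [Equiv.Perm.mul_apply, Equiv.swap_apply_left]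
    have hvi : (w * Equiv.swap p q) i = w i := by
      rw [Equiv.Perm.mul_apply, Equiv.swap_apply_of_ne_of_ne hi.ne hiq.ne]
    have h2 : numInv (w * Equiv.swap p q * Equiv.swap i p) < numInv (w * Equiv.swap p q) :=
      numInv_mul_swap_lt (w * Equiv.swap p q) i p hi (by rw [hvp, hvi]; exact hqi)
    rw [hiI] at h2
    exact absurd (lt_trans h2 h1) (lt_irrefl _)
  -- values of w'
  have hw'i : w' i = w q := by
    rw [hw', Equiv.Perm.mul_apply, Equiv.Perm.mul_apply, Equiv.swap_apply_left,
      Equiv.swap_apply_left]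
  have hw'p : w' p = w i := by
    rw [hw', Equiv.Perm.mul_apply, Equiv.Perm.mul_apply, Equiv.swap_apply_right,
      Equiv.swap_apply_of_ne_of_ne hi.ne hiq.ne]
  have hw'q : w' q = w p := by
    rw [hw', Equiv.Perm.mul_apply, Equiv.Perm.mul_apply,
      Equiv.swap_apply_of_ne_of_ne hiq.ne' hpq.ne', Equiv.swap_apply_right]
  have hw'o : ∀ x : Fin n, x ≠ i → x ≠ p → x ≠ q → w' x = w x := by
    intro x h1 h2 h3
    rw [hw', Equiv.Perm.mul_apply, Equiv.Perm.mul_apply,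
      Equiv.swap_apply_of_ne_of_ne h1 h2, Equiv.swap_apply_of_ne_of_ne h2 h3]
  -- F8 : values strictly between p and q are below w q
  have hF8 : ∀ k : Fin n, p < k → k < q → w k < w q := by
    intro k h1 h2
    by_contra h
    have hne : w q ≠ w k := fun e => h2.ne' (w.injective e)
    have hqk : w q < w k := lt_of_le_of_ne (not_lt.mp h) hne
    exact absurd (hpmax k ⟨a₀, q, lt_trans ha₀p h1, h2, hwa₀, hqk⟩) (not_le.mpr h1)
  -- F9 : values after q that are below w p are below everything before p
  have hF9 : ∀ b : Fin n, q < b → w b < w p → ∀ x : Fin n, x < p → w b < w x := by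
    intro b h1 h2 x h3
    by_contra h
    have hne : w x ≠ w b := fun e => (lt_trans (lt_trans h3 hpq) h1).ne (w.injective e)
    have hxb : w x < w b := lt_of_le_of_ne (not_lt.mp h) hne
    exact absurd (hqmax b (lt_trans hpq h1) h2 ⟨x, h3, hxb⟩) (not_le.mpr h1)
  -- main claim: w' has no 132 pattern centered after p
  have claim : ∀ t : Fin n, p < t → ∀ a b : Fin n, a < t → t < b →
      w' a < w' b → w' b < w' t → False := by
    intro t hpt a b hat htb h1 h2
    rcases lt_trichotomy t q with htq | heq | hqt
    · -- p < t < q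
      have hw't : w' t = w t :=
        hw'o t (lt_trans hi hpt).ne' hpt.ne' htq.ne
      have hwt : w t < w q := hF8 t hpt htq
      by_cases hbq : b = q
      · rw [hbq, hw'q, hw't] at h2
        exact absurd (lt_trans (lt_trans h2 hwt) hwqp) (lt_irrefl _)
      · have hw'b : w' b = w b :=
          hw'o b (lt_trans (lt_trans hi hpt) htb).ne' (lt_trans hpt htb).ne' hbq
        rw [hw'b, hw't] at h2
        by_cases hai : a = i
        · rw [hai, hw'i, hw'b] at h1
          exact absurd (lt_trans (lt_trans h1 h2) hwt) (lt_irrefl _)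
        · by_cases hap : a = p
          · rw [hap, hw'p, hw'b] at h1
            exact absurd (hpmax t ⟨i, b, lt_trans hi hpt, htb, h1, h2⟩) (not_le.mpr hpt)
          · have haq : a ≠ q := (lt_trans hat htq).ne
            rw [hw'o a hai hap haq, hw'b] at h1
            exact absurd (hpmax t ⟨a, b, hat, htb, h1, h2⟩) (not_le.mpr hpt)
    · -- t = q
      rw [heq] at hpt hat htb h2
      have hw'b : w' b = w b :=
        hw'o b (lt_trans hiq htb).ne' (lt_trans hpq htb).ne' htb.ne'
      rw [hw'q, hw'b] at h2
      rw [hw'b] at h1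
      by_cases hai : a = i
      · rw [hai, hw'i] at h1
        exact absurd (lt_trans (lt_trans h1 (hF9 b htb h2 i hi)) hwiq) (lt_irrefl _)
      · by_cases hap : a = p
        · rw [hap, hw'p] at h1
          exact absurd (lt_trans h1 (hF9 b htb h2 i hi)) (lt_irrefl _)
        · have haq : a ≠ q := hat.ne
          rw [hw'o a hai hap haq] at h1
          rcases lt_or_gt_of_ne hap with hlt | hgt
          · exact absurd (lt_trans h1 (hF9 b htb h2 a hlt)) (lt_irrefl _)
          · have hbwq : w b < w q := lt_trans (hF9 b htb h2 a₀ ha₀p) hwa₀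
            exact absurd (hpmax q ⟨a, b, hat, htb, h1, hbwq⟩) (not_le.mpr hpq)
    · -- q < t
      have hw't : w' t = w t :=
        hw'o t (lt_trans hiq hqt).ne' (lt_trans hpq hqt).ne' hqt.ne'
      have hw'b : w' b = w b :=
        hw'o b (lt_trans (lt_trans hiq hqt) htb).ne' (lt_trans (lt_trans hpq hqt) htb).ne'
          (lt_trans hqt htb).ne'
      rw [hw'b, hw't] at h2
      rw [hw'b] at h1
      by_cases hai : a = i
      · rw [hai, hw'i] at h1
        exact absurd (hpmax t ⟨a₀, b, lt_trans ha₀p hpt, htb, lt_trans hwa₀ h1, h2⟩)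
          (not_le.mpr hpt)
      · by_cases hap : a = p
        · rw [hap, hw'p] at h1
          exact absurd (hpmax t ⟨i, b, lt_trans hi hpt, htb, h1, h2⟩) (not_le.mpr hpt)
        · by_cases haq : a = q
          · rw [haq, hw'q] at h1
            exact absurd (hpmax t ⟨a₀, b, lt_trans ha₀p hpt, htb,
              lt_trans hwa₀ (lt_trans hwqp h1), h2⟩) (not_le.mpr hpt)
          · rw [hw'o a hai hap haq] at h1
            exact absurd (hpmax t ⟨a, b, hat, htb, h1, h2⟩) (not_le.mpr hpt)
  -- conclude
  obtain ⟨a, b, h1, h2, h3, h4⟩ := hp'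
  have hp'le : p' ≤ p := by
    by_contra h
    exact claim p' (not_le.mp h) a b h1 h2 h3 h4
  rcases lt_or_eq_of_le hp'le with hlt | heq
  · exact Or.inl hlt
  · refine Or.inr ⟨heq, ?_⟩
    obtain ⟨hpq', hlt', -⟩ := hq'
    rw [heq] at hpq' hlt'
    rw [hw'p] at hlt'
    have hq'q : q' ≠ q := by
      intro e
      rw [e, hw'q] at hlt'
      exact absurd (lt_trans (lt_trans hlt' hwiq) hwqp) (lt_irrefl _)
    rw [hw'o q' (lt_trans hi hpq').ne' hpq'.ne' hq'q] at hlt' ⊢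
    exact lt_trans hlt' hwiq
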